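/- Let P^n = {0 = t^n_0 < t^n_1 < ⋯ < t^n_{N_n} = T}, n ∈ ℕ, be a nested sequence of partitions of [0,T] (P^n ⊆ P^{n+1}) with mesh |P^n| → 0, let F : [0,T] → ℝ^d be càdlàg, and define F^n_t := F_T·1_{{T}}(t) + Σ_{k=0}^{N_n−1} F_{t^n_k}·1_{[t^n_k,t^n_{k+1})}(t). Let J_F := {t ∈ (0,T] : F_{t−} ≠ F_t} be the set of jump times of F. Then the following are equivalent: (i) J_F ⊆ ∪_{n∈ℕ} P^n; (ii) the sequence (F^n)_{n∈ℕ} converges pointwise to F on [0,T]; (iii) the sequence (F^n)_{n∈ℕ} converges uniformly to F on [0,T]. -/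

import Mathlib

open Set Filter MeasureTheory
open scoped Topology InnerProductSpace BigOperators

noncomputable section

/-- `ℝ^d` with the Euclidean norm. -/
abbrev Vec (d : ℕ) := EuclideanSpace ℝ (Fin d)

/-- `ℝ^{d×d}` with the Euclidean (Frobenius) norm. -/
abbrev Mat (d : ℕ) := EuclideanSpace ℝ (Fin d × Fin d)

def mkVec {d : ℕ} (f : Fin d → ℝ) : Vec d := (WithLp.equiv 2 (Fin d → ℝ)).symm f

def mkMat {d : ℕ} (f : Fin d × Fin d → ℝ) : Mat d := (WithLp.equiv 2 (Fin d × Fin d → ℝ)).symm f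

/-- The tensor product `a ⊗ b` of two vectors, as a `d × d` matrix. -/
def tensor {d : ℕ} (a b : Vec d) : Mat d := mkMat (fun ij => a ij.1 * b ij.2)

/-- A matrix (an element of `L(ℝ^d, ℝ^d)`) applied to a vector. -/
def matApply {d : ℕ} (M : Mat d) (v : Vec d) : Vec d := mkVec (fun i => ∑ j, M (i, j) * v j)

/-- The matrix with `(i,j)` entry `Σ_k A_{ki} B_{kj}`, i.e. `AᵀB`. -/
def matTProd {d : ℕ} (A B : Mat d) : Mat d := mkMat (fun ij => ∑ k, A (k, ij.1) * B (k, ij.2))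

/-- The identity matrix. -/
def idMat {d : ℕ} : Mat d := mkMat (fun ij => if ij.1 = ij.2 then (1 : ℝ) else 0)

/-- The contraction `F' G' 𝕏 := Σ_{k,i,j} F'_{ki} G'_{kj} 𝕏_{ij}`. -/
def ddContract {d : ℕ} (A B X : Mat d) : ℝ := ∑ k, ∑ i, ∑ j, A (k, i) * B (k, j) * X (i, j)

/-- The increment process `(s,t) ↦ X_t - X_s` of a path. -/
def inc {E : Type*} [AddCommGroup E] (X : ℝ → E) : ℝ → ℝ → E := fun s t => X t - X s

/-- A (finite) partition `s = τ_0 < τ_1 < ⋯ < τ_N = t` of the interval `[s,t]`. -/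
structure IntervalPartition (s t : ℝ) where
  N : ℕ
  τ : ℕ → ℝ
  Npos : 0 < N
  first : τ 0 = s
  last : τ N = t
  mono : ∀ k < N, τ k < τ (k + 1)

/-- The mesh of the partition is `< δ`. -/
def IntervalPartition.MeshLt {s t : ℝ} (P : IntervalPartition s t) (δ : ℝ) : Prop :=
  ∀ k < P.N, P.τ (k + 1) - P.τ k < δ

/-- The sum `Σ_{[u,v] ∈ P} |A_{u,v}|^p` along a partition `P`, for a two-parameter
function `A`. -/
def varSumOn {E : Type*} [NormedAddCommGroup E] (p : ℝ) (A : ℝ → ℝ → E)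
    {s t : ℝ} (P : IntervalPartition s t) : ℝ :=
  ∑ k ∈ Finset.range P.N, ‖A (P.τ k) (P.τ (k + 1))‖ ^ p

/-- The set of all sums `Σ_{[u,v] ∈ P} |A_{u,v}|^p` over partitions `P` of `[s,t]`. -/
def pVarSums {E : Type*} [NormedAddCommGroup E] (p : ℝ) (A : ℝ → ℝ → E) (s t : ℝ) : Set ℝ :=
  {x | ∃ P : IntervalPartition s t, x = varSumOn p A P}

/-- The `p`-variation `‖A‖_{p,[s,t]} := (sup_P Σ_{[u,v] ∈ P} |A_{u,v}|^p)^{1/p}` of a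
two-parameter function `A` (for a path `X`, apply this to `inc X`). -/
def pVar {E : Type*} [NormedAddCommGroup E] (p : ℝ) (A : ℝ → ℝ → E) (s t : ℝ) : ℝ :=
  sSup (pVarSums p A s t) ^ (1 / p)

/-- `A` has finite `p`-variation on `[s,t]`. -/
def HasBddPVar {E : Type*} [NormedAddCommGroup E] (p : ℝ) (A : ℝ → ℝ → E) (s t : ℝ) : Prop :=
  BddAbove (pVarSums p A s t)

/-- `f` is càdlàg on `[a,b]`: right-continuous on `[a,b)` with left limits on `(a,b]`. -/
def CadlagOn {E : Type*} [TopologicalSpace E] (f : ℝ → E) (a b : ℝ) : Prop :=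
  (∀ t ∈ Ico a b, Tendsto f (𝓝[>] t) (𝓝 (f t))) ∧
  (∀ t ∈ Ioc a b, ∃ l, Tendsto f (𝓝[<] t) (𝓝 l))

/-- The supremum norm of `f` on `[a,b]`. -/
def supNormOn {E : Type*} [NormedAddCommGroup E] (f : ℝ → E) (a b : ℝ) : ℝ :=
  sSup ((fun u => ‖f u‖) '' Icc a b)

/-- A control function on `Δ_{[0,T]}`: nonnegative and superadditive. -/
def IsControl (T : ℝ) (w : ℝ → ℝ → ℝ) : Prop :=
  (∀ ⦃s t : ℝ⦄, 0 ≤ s → s ≤ t → t ≤ T → 0 ≤ w s t) ∧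
  (∀ ⦃s u t : ℝ⦄, 0 ≤ s → s ≤ u → u ≤ t → t ≤ T → w s u + w u t ≤ w s t)

/-- The set of jump times of `f` in `(0,T]`. -/
def jumpSet {E : Type*} [TopologicalSpace E] (f : ℝ → E) (T : ℝ) : Set ℝ :=
  {u | u ∈ Ioc (0 : ℝ) T ∧ Function.leftLim f u ≠ f u}

/-- A càdlàg `p`-rough path `(X, Z, 𝕏)` over `ℝ^d` on `[0,T]`:
`X, Z ∈ D^p([0,T];ℝ^d)`, `𝕏 ∈ D^{p/2}_2(Δ_{[0,T]};ℝ^{d×d})`, and Chen's relation holds. -/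
structure IsRoughPath (d : ℕ) (p T : ℝ) (X Z : ℝ → Vec d) (XX : ℝ → ℝ → Mat d) : Prop where
  cadlagX : CadlagOn X 0 T
  cadlagZ : CadlagOn Z 0 T
  varX : HasBddPVar p (inc X) 0 T
  varZ : HasBddPVar p (inc Z) 0 T
  cadlagXX₁ : ∀ t ∈ Icc (0 : ℝ) T, CadlagOn (fun s => XX s t) 0 t
  cadlagXX₂ : ∀ s ∈ Icc (0 : ℝ) T, CadlagOn (fun t => XX s t) s T
  varXX : HasBddPVar (p / 2) XX 0 T
  chen : ∀ ⦃s u t : ℝ⦄, 0 ≤ s → s ≤ u → u ≤ t → t ≤ T →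
    XX s t = XX s u + XX u t + tensor (Z u - Z s) (X t - X u)

/-- The remainder `R^F_{s,t} := F_{s,t} - F'_s Z_{s,t}` of a controlled path. -/
def rem {d : ℕ} (Z F : ℝ → Vec d) (F' : ℝ → Mat d) : ℝ → ℝ → Vec d :=
  fun s t => F t - F s - matApply (F' s) (Z t - Z s)

/-- `(F, F')` is a controlled path in `𝒱^{q,r}_Z` on `[0,T]` (with `F ∈ D^p`):
`F ∈ D^p([0,T];ℝ^d)`, `F' ∈ D^q([0,T];L(ℝ^d,ℝ^d))` and `R^F ∈ D^r_2(Δ_{[0,T]};ℝ^d)`. -/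
structure IsControlledPath (d : ℕ) (p q r T : ℝ) (Z : ℝ → Vec d)
    (F : ℝ → Vec d) (F' : ℝ → Mat d) : Prop where
  cadlagF : CadlagOn F 0 T
  varF : HasBddPVar p (inc F) 0 T
  cadlagF' : CadlagOn F' 0 T
  varF' : HasBddPVar q (inc F') 0 T
  cadlagR₁ : ∀ t ∈ Icc (0 : ℝ) T, CadlagOn (fun s => rem Z F F' s t) 0 t
  cadlagR₂ : ∀ s ∈ Icc (0 : ℝ) T, CadlagOn (fun t => rem Z F F' s t) s T
  varR : HasBddPVar r (rem Z F F') 0 T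

/-- The controlled path norm `‖F,F'‖_{𝒱^{q,r}_Z,[0,T]} := |F'_0| + ‖F'‖_q + ‖R^F‖_r`. -/
def ctrlNorm {d : ℕ} (q r T : ℝ) (Z F : ℝ → Vec d) (F' : ℝ → Mat d) : ℝ :=
  ‖F' 0‖ + pVar q (inc F') 0 T + pVar r (rem Z F F') 0 T

/-- Compensated Riemann sum `Σ (⟨F_u, G_{u,v}⟩ + F'_u G'_u 𝕏_{u,v})` along a partition of `[0,t]`. -/
def compSum {d : ℕ} (F : ℝ → Vec d) (F' : ℝ → Mat d) (G : ℝ → Vec d) (G' : ℝ → Mat d)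
    (XX : ℝ → ℝ → Mat d) {t : ℝ} (P : IntervalPartition 0 t) : ℝ :=
  ∑ k ∈ Finset.range P.N,
    (⟪F (P.τ k), G (P.τ (k + 1)) - G (P.τ k)⟫_ℝ
      + ddContract (F' (P.τ k)) (G' (P.τ k)) (XX (P.τ k) (P.τ (k + 1))))

/-- `I` is the value at time `t` of the rough integral `∫₀ᵗ F dG`: the compensated Riemann
sums converge to `I` along every sequence of partitions of `[0,t]` with mesh tending to `0`. -/
def IsRoughIntegralAt {d : ℕ} (F : ℝ → Vec d) (F' : ℝ → Mat d) (G : ℝ → Vec d)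
    (G' : ℝ → Mat d) (XX : ℝ → ℝ → Mat d) (t : ℝ) (I : ℝ) : Prop :=
  ∀ ε > 0, ∃ δ > 0, ∀ P : IntervalPartition 0 t, P.MeshLt δ →
    |compSum F F' G G' XX P - I| < ε

/-- The rough path seminorm `‖X‖_{p,[0,T]} + ‖Z‖_{p,[0,T]} + ‖𝕏‖_{p/2,[0,T]}`. -/
def roughNorm {d : ℕ} (p T : ℝ) (X Z : ℝ → Vec d) (XX : ℝ → ℝ → Mat d) : ℝ :=
  pVar p (inc X) 0 T + pVar p (inc Z) 0 T + pVar (p / 2) XX 0 T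

/-- The rough path distance `‖X − X̃‖_p + ‖Z − Z̃‖_p + ‖𝕏 − 𝕏̃‖_{p/2}`. -/
def roughDist {d : ℕ} (p T : ℝ) (X Z X' Z' : ℝ → Vec d) (XX XX' : ℝ → ℝ → Mat d) : ℝ :=
  pVar p (inc (fun u => X u - X' u)) 0 T + pVar p (inc (fun u => Z u - Z' u)) 0 T
    + pVar (p / 2) (fun s t => XX s t - XX' s t) 0 T

/-- A nested sequence of partitions `P^n = {0 = t^n_0 < t^n_1 < ⋯ < t^n_{N_n} = T}` of `[0,T]`
with vanishing mesh size. -/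
structure PartitionSeq (T : ℝ) where
  N : ℕ → ℕ
  t : ℕ → ℕ → ℝ
  Npos : ∀ n, 0 < N n
  first : ∀ n, t n 0 = 0
  last : ∀ n, t n (N n) = T
  mono : ∀ n, ∀ k < N n, t n k < t n (k + 1)
  nested : ∀ n, ∀ k ≤ N n, ∃ l ≤ N (n + 1), t (n + 1) l = t n k
  mesh : ∀ ε > 0, ∃ M : ℕ, ∀ n ≥ M, ∀ k < N n, t n (k + 1) - t n k < ε

/-- The set `∪_{n ∈ ℕ} P^n` of all partition points. -/
def PartitionSeq.points {T : ℝ} (π : PartitionSeq T) : Set ℝ :=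
  {x | ∃ n, ∃ k ≤ π.N n, π.t n k = x}

/-- The left-point discretization
`S^n_u = S_T 1_{{T}}(u) + Σ_k S_{t^n_k} 1_{[t^n_k, t^n_{k+1})}(u)`. -/
def PartitionSeq.disc {T : ℝ} (π : PartitionSeq T) {E : Type*} [NormedAddCommGroup E]
    (S : ℝ → E) (n : ℕ) (u : ℝ) : E :=
  Set.indicator {T} S u
    + ∑ k ∈ Finset.range (π.N n),
        Set.indicator (Ico (π.t n k) (π.t n (k + 1))) (fun _ => S (π.t n k)) u

/-- The Riemann sum `∫₀ᵘ S^n ⊗ dS := Σ_k S_{t^n_k} ⊗ (S_{t^n_{k+1} ∧ u} - S_{t^n_k ∧ u})`. -/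
def riemannSum {d : ℕ} {T : ℝ} (π : PartitionSeq T) (S : ℝ → Vec d) (n : ℕ) (u : ℝ) : Mat d :=
  ∑ k ∈ Finset.range (π.N n),
    tensor (S (π.t n k)) (S (min (π.t n (k + 1)) u) - S (min (π.t n k) u))

/-- The Riemann sum `∫_{t^n_k}^{t^n_l} S^n ⊗ dS` between two partition points. -/
def riemannBetween {d : ℕ} {T : ℝ} (π : PartitionSeq T) (S : ℝ → Vec d) (n k l : ℕ) : Mat d :=
  ∑ j ∈ Finset.Ico k l, tensor (S (π.t n j)) (S (π.t n (j + 1)) - S (π.t n j))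

/-- Property (RIE) for `S` with respect to `p` and `(P^n)`, with Riemann-sum limit `II` and
control function `w`:  `S` is càdlàg, `S^n → S` uniformly, the Riemann sums `∫₀· S^n ⊗ dS`
converge uniformly to `II`, and `w` dominates `|S_{s,t}|^p` as well as
`|∫_{t^n_k}^{t^n_l} S^n ⊗ dS - S_{t^n_k} ⊗ S_{t^n_k,t^n_l}|^{p/2}`. -/
structure SatisfiesRIE (d : ℕ) (p T : ℝ) (π : PartitionSeq T) (S : ℝ → Vec d)
    (II : ℝ → Mat d) (w : ℝ → ℝ → ℝ) : Prop where
  cadlag : CadlagOn S 0 T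
  discUnif : TendstoUniformlyOn (fun n => π.disc S n) S atTop (Icc 0 T)
  riemannUnif : TendstoUniformlyOn (fun n => riemannSum π S n) II atTop (Icc 0 T)
  control : IsControl T w
  domS : ∀ ⦃s t : ℝ⦄, 0 ≤ s → s ≤ t → t ≤ T → ‖S t - S s‖ ^ p ≤ w s t
  domA : ∀ n : ℕ, ∀ ⦃k l : ℕ⦄, k < l → l ≤ π.N n →
    ‖riemannBetween π S n k l - tensor (S (π.t n k)) (S (π.t n l) - S (π.t n k))‖ ^ (p / 2)
      ≤ w (π.t n k) (π.t n l)

/-- The canonical second-level function `A_{s,t} := ∫ₛᵗ S ⊗ dS - S_s ⊗ S_{s,t}`,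
built from the limit `II = ∫₀· S ⊗ dS` of the Riemann sums in Property (RIE). -/
def roughA {d : ℕ} (S : ℝ → Vec d) (II : ℝ → Mat d) : ℝ → ℝ → Mat d :=
  fun s t => II t - II s - tensor (S s) (S t - S s)

/-! ### Auxiliary lemmas for the discretization convergence theorem -/

namespace PartitionSeq

variable {T : ℝ} (π : PartitionSeq T)

lemma pt_mono {n k l : ℕ} (hkl : k ≤ l) (hl : l ≤ π.N n) : π.t n k ≤ π.t n l := by
  induction l, hkl using Nat.le_induction with
  | base => exact le_refl _
  | succ m hkm ih =>
    exact (ih (by omega)).trans (le_of_lt (π.mono n m (by omega)))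

lemma pt_lt {n k l : ℕ} (hkl : k < l) (hl : l ≤ π.N n) : π.t n k < π.t n l :=
  lt_of_lt_of_le (π.mono n k (by omega)) (π.pt_mono hkl hl)

lemma pt_nonneg {n k : ℕ} (hk : k ≤ π.N n) : 0 ≤ π.t n k := by
  have := π.pt_mono (Nat.zero_le k) hk
  rwa [π.first] at this

lemma pt_le_T {n k : ℕ} (hk : k ≤ π.N n) : π.t n k ≤ T := by
  have := π.pt_mono hk le_rfl
  rwa [π.last] at this

/-- Index of the largest partition point `≤ u`. -/
noncomputable def idx (n : ℕ) (u : ℝ) : ℕ :=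
  @Nat.findGreatest (fun k => π.t n k ≤ u) (Classical.decPred _) (π.N n)

lemma idx_le {n : ℕ} {u : ℝ} : π.idx n u ≤ π.N n :=
  @Nat.findGreatest_le (fun k => π.t n k ≤ u) (Classical.decPred _) _

lemma t_idx_le {n : ℕ} {u : ℝ} (hu0 : 0 ≤ u) : π.t n (π.idx n u) ≤ u := by
  have h : π.t n 0 ≤ u := by rw [π.first]; exact hu0
  exact @Nat.findGreatest_spec 0 (fun k => π.t n k ≤ u) (Classical.decPred _) (π.N n) (Nat.zero_le _) h

lemma idx_lt {n : ℕ} {u : ℝ} (hu0 : 0 ≤ u) (huT : u < T) : π.idx n u < π.N n := by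
  rcases lt_or_eq_of_le (π.idx_le (n := n) (u := u)) with h | h
  · exact h
  · exfalso
    have := π.t_idx_le (n := n) hu0
    rw [h, π.last] at this
    linarith

lemma lt_t_idx_succ {n : ℕ} {u : ℝ} (hu0 : 0 ≤ u) (huT : u < T) :
    u < π.t n (π.idx n u + 1) := by
  by_contra h
  push_neg at h
  exact @Nat.findGreatest_is_greatest (π.idx n u + 1) (fun k => π.t n k ≤ u)
    (Classical.decPred _) (π.N n) (Nat.lt_succ_self _) (π.idx_lt hu0 huT) h

lemma le_idx {n l : ℕ} {u : ℝ} (hl : l ≤ π.N n) (h : π.t n l ≤ u) : l ≤ π.idx n u :=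
  @Nat.le_findGreatest l (fun k => π.t n k ≤ u) (Classical.decPred _) (π.N n) hl h

lemma disc_eq_prev {E : Type*} [NormedAddCommGroup E] (S : ℝ → E) (n : ℕ) {u : ℝ}
    (hu0 : 0 ≤ u) (huT : u < T) : π.disc S n u = S (π.t n (π.idx n u)) := by
  unfold PartitionSeq.disc
  rw [Set.indicator_of_notMem (by simp [ne_of_lt huT] : u ∉ ({T} : Set ℝ))]
  rw [Finset.sum_eq_single_of_mem (π.idx n u) (Finset.mem_range.2 (π.idx_lt hu0 huT))]
  · rw [Set.indicator_of_mem (Set.mem_Ico.2 ⟨π.t_idx_le hu0, π.lt_t_idx_succ hu0 huT⟩), zero_add]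
  · intro k hk hne
    apply Set.indicator_of_notMem
    rintro ⟨h1, h2⟩
    rcases lt_or_gt_of_ne hne with h | h
    · have hle : π.t n (k + 1) ≤ π.t n (π.idx n u) :=
        π.pt_mono (by omega) π.idx_le
      have := π.t_idx_le (n := n) hu0
      linarith
    · have hk' : k ≤ π.N n := le_of_lt (Finset.mem_range.1 hk)
      have := π.le_idx hk' h1
      omega

lemma disc_at_T {E : Type*} [NormedAddCommGroup E] (S : ℝ → E) (n : ℕ) :
    π.disc S n T = S T := by
  unfold PartitionSeq.disc
  rw [Set.indicator_of_mem (Set.mem_singleton T)]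
  rw [Finset.sum_eq_zero, add_zero]
  intro k hk
  apply Set.indicator_of_notMem
  rintro ⟨h1, h2⟩
  have : π.t n (k + 1) ≤ T := π.pt_le_T (Nat.succ_le_of_lt (Finset.mem_range.1 hk))
  linarith

lemma nested_trans {n m : ℕ} (hnm : n ≤ m) {k : ℕ} (hk : k ≤ π.N n) :
    ∃ l ≤ π.N m, π.t m l = π.t n k := by
  induction m, hnm using Nat.le_induction with
  | base => exact ⟨k, hk, rfl⟩
  | succ m hm ih =>
    obtain ⟨l, hl, hle⟩ := ih
    obtain ⟨l', hl', h'⟩ := π.nested m l hl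
    exact ⟨l', hl', by rw [h', hle]⟩

lemma gap_lt : ∀ δ > (0 : ℝ), ∃ M : ℕ, ∀ n ≥ M, ∀ u : ℝ, 0 ≤ u → u < T →
    u - π.t n (π.idx n u) < δ := by
  intro δ hδ
  obtain ⟨M, hM⟩ := π.mesh δ hδ
  refine ⟨M, fun n hn u hu0 huT => ?_⟩
  have h1 := π.lt_t_idx_succ (n := n) hu0 huT
  have h2 := hM n hn (π.idx n u) (π.idx_lt hu0 huT)
  linarith

lemma T_mem_points : T ∈ π.points :=
  ⟨0, π.N 0, le_rfl, π.last 0⟩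

lemma zero_mem_points : (0 : ℝ) ∈ π.points :=
  ⟨0, 0, (π.Npos 0).le, π.first 0⟩

/-- If `u` is a partition point, the discretizations at `u` are eventually equal to `S u`. -/
lemma disc_eventually_eq {E : Type*} [NormedAddCommGroup E] (S : ℝ → E) {u : ℝ}
    (hu : u ∈ π.points) (hu0 : 0 ≤ u) (huT : u ≤ T) :
    ∀ᶠ n in atTop, π.disc S n u = S u := by
  rcases lt_or_eq_of_le huT with huT' | huT'
  · obtain ⟨n₀, k₀, hk₀, ht⟩ := hu
    filter_upwards [eventually_ge_atTop n₀] with n hn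
    obtain ⟨l, hl, hle⟩ := π.nested_trans hn hk₀
    rw [π.disc_eq_prev S n hu0 huT']
    have h1 : π.t n (π.idx n u) ≤ u := π.t_idx_le hu0
    have h2 : l ≤ π.idx n u := π.le_idx hl (by rw [hle, ht])
    have h3 : u ≤ π.t n (π.idx n u) := by
      calc u = π.t n l := by rw [hle, ht]
        _ ≤ π.t n (π.idx n u) := π.pt_mono h2 π.idx_le
    rw [le_antisymm h1 h3]
  · subst huT'
    filter_upwards with n
    exact π.disc_at_T S n

/-- If `u` is not a partition point, the discretizations at `u` converge to the left limit. -/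
lemma disc_tendsto_leftLim {E : Type*} [NormedAddCommGroup E] {S : ℝ → E}
    (hS : CadlagOn S 0 T) {u : ℝ} (hp : u ∉ π.points) (hu0 : 0 < u) (huT : u < T) :
    Tendsto (fun n => π.disc S n u) atTop (𝓝 (Function.leftLim S u)) := by
  have hprev_lt : ∀ n, π.t n (π.idx n u) < u := fun n =>
    lt_of_le_of_ne (π.t_idx_le hu0.le) (fun h => hp ⟨n, π.idx n u, π.idx_le, h⟩)
  have hprev : Tendsto (fun n => π.t n (π.idx n u)) atTop (𝓝 u) := by
    rw [Metric.tendsto_atTop]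
    intro δ hδ
    obtain ⟨M, hM⟩ := π.gap_lt δ hδ
    refine ⟨M, fun n hn => ?_⟩
    rw [Real.dist_eq, abs_of_nonpos (by linarith [hprev_lt n])]
    have := hM n hn u hu0.le huT
    linarith
  have hprev' : Tendsto (fun n => π.t n (π.idx n u)) atTop (𝓝[<] u) :=
    tendsto_nhdsWithin_iff.2 ⟨hprev, Filter.Eventually.of_forall fun n => hprev_lt n⟩
  obtain ⟨l, hl⟩ := hS.2 u ⟨hu0, huT.le⟩
  have hll : Function.leftLim S u = l :=
    leftLim_eq_of_tendsto hl
  have : Tendsto (fun n => S (π.t n (π.idx n u))) atTop (𝓝 (Function.leftLim S u)) := by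
    rw [hll]; exact hl.comp hprev'
  refine this.congr fun n => ?_
  rw [π.disc_eq_prev S n hu0.le huT]

end PartitionSeq

section DiscConv

variable {T : ℝ} {E : Type*} [NormedAddCommGroup E] {F : ℝ → E} {π : PartitionSeq T}

/-- Right-continuity, including the point itself. -/
lemma cadlag_tendsto_right (hF : CadlagOn F 0 T) {u : ℝ} (hu0 : 0 ≤ u) (huT : u < T) :
    Tendsto F (𝓝[≥] u) (𝓝 (F u)) := by
  have h : Ici u = insert u (Ioi u) := by
    ext x; simp [le_iff_lt_or_eq, or_comm, eq_comm]
  rw [h, nhdsWithin_insert]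
  exact Filter.tendsto_sup.2 ⟨tendsto_pure_nhds F u, hF.1 u ⟨hu0, huT⟩⟩

lemma cadlag_tendsto_left (hF : CadlagOn F 0 T) {u : ℝ} (hu : u ∈ Ioc (0 : ℝ) T) :
    Tendsto F (𝓝[<] u) (𝓝 (Function.leftLim F u)) := by
  obtain ⟨l, hl⟩ := hF.2 u hu
  rwa [leftLim_eq_of_tendsto hl]

/-- (i) → (ii): pointwise convergence of the discretizations. -/
lemma tendsto_disc_of_jump_subset (hF : CadlagOn F 0 T)
    (hJ : jumpSet F T ⊆ π.points) {t : ℝ} (ht : t ∈ Icc (0 : ℝ) T) :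
    Tendsto (fun n => π.disc F n t) atTop (𝓝 (F t)) := by
  by_cases hp : t ∈ π.points
  · exact tendsto_const_nhds.congr'
      ((π.disc_eventually_eq F hp ht.1 ht.2).mono fun n h => h.symm)
  · have ht0 : 0 < t := lt_of_le_of_ne ht.1 (fun h => hp (h ▸ π.zero_mem_points))
    have htT : t < T := lt_of_le_of_ne ht.2 (fun h => hp (h ▸ π.T_mem_points))
    have hnj : Function.leftLim F t = F t := by
      by_contra h
      exact hp (hJ ⟨⟨ht0, ht.2⟩, h⟩)
    have := π.disc_tendsto_leftLim hF hp ht0 htT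
    rwa [hnj] at this

/-- (ii) → (i). -/
lemma jump_subset_of_tendsto_disc (hF : CadlagOn F 0 T)
    (hpw : ∀ t ∈ Icc (0 : ℝ) T, Tendsto (fun n => π.disc F n t) atTop (𝓝 (F t))) :
    jumpSet F T ⊆ π.points := by
  rintro u ⟨⟨hu0, huT⟩, hjump⟩
  by_contra hp
  have huT' : u < T := lt_of_le_of_ne huT (fun h => hp (h ▸ π.T_mem_points))
  have h1 := π.disc_tendsto_leftLim hF hp hu0 huT'
  have h2 := hpw u ⟨hu0.le, huT⟩
  exact hjump (tendsto_nhds_unique h1 h2)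

end DiscConv

/-- (i) → (iii): uniform convergence of the discretizations. -/
lemma unif_of_jump_subset {T : ℝ} {E : Type*} [NormedAddCommGroup E] {F : ℝ → E}
    {π : PartitionSeq T} (hT : 0 < T) (hF : CadlagOn F 0 T)
    (hJ : jumpSet F T ⊆ π.points) :
    TendstoUniformlyOn (fun n => π.disc F n) F atTop (Icc 0 T) := by
  rw [Metric.tendstoUniformlyOn_iff]
  by_contra hcon
  push_neg at hcon
  obtain ⟨ε, hε, hfreq⟩ := hcon
  have hfreq' : ∃ᶠ n in atTop, ∃ x ∈ Icc (0 : ℝ) T, ε ≤ dist (F x) (π.disc F n x) := by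
    exact hfreq
  obtain ⟨φ, hφ, hφP⟩ := Filter.extraction_of_frequently_atTop hfreq'
  choose u hu hd using hφP
  have huT : ∀ j, u j < T := by
    intro j
    rcases lt_or_eq_of_le (hu j).2 with h | h
    · exact h
    · exfalso
      have := hd j
      rw [h, π.disc_at_T, dist_self] at this
      linarith
  set a : ℕ → ℝ := fun j => π.t (φ j) (π.idx (φ j) (u j)) with ha
  have hdisc : ∀ j, π.disc F (φ j) (u j) = F (a j) := fun j =>
    π.disc_eq_prev F (φ j) (hu j).1 (huT j)
  have hd' : ∀ j, ε ≤ dist (F (u j)) (F (a j)) := fun j => by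
    have := hd j; rwa [hdisc j] at this
  have hale : ∀ j, a j ≤ u j := fun j => π.t_idx_le (hu j).1
  have ha0 : ∀ j, 0 ≤ a j := fun j => π.pt_nonneg π.idx_le
  -- Bolzano–Weierstrass
  obtain ⟨uLim, huLim, ψ, hψ, hulim⟩ :=
    isCompact_Icc.tendsto_subseq (fun j => hu j)
  -- gap tends to zero
  have hgap : Tendsto (fun i => u (ψ i) - a (ψ i)) atTop (𝓝 0) := by
    rw [Metric.tendsto_atTop]
    intro δ hδ
    obtain ⟨M, hM⟩ := π.gap_lt δ hδ
    refine ⟨M, fun i hi => ?_⟩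
    have h1 : M ≤ φ (ψ i) := le_trans hi (le_trans hψ.le_apply hφ.le_apply)
    have h2 := hM (φ (ψ i)) h1 (u (ψ i)) (hu (ψ i)).1 (huT (ψ i))
    rw [Real.dist_eq, sub_zero, abs_of_nonneg (by linarith [hale (ψ i)])]
    exact h2
  have halim : Tendsto (fun i => a (ψ i)) atTop (𝓝 uLim) := by
    have := hulim.sub hgap
    rw [sub_zero] at this
    refine this.congr fun i => ?_
    simp [Function.comp]
  -- case distinction
  by_cases hcase : ∃ᶠ i in atTop, u (ψ i) < uLim
  · -- u from the left: both F(u) and F(a) tend to the left limit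
    obtain ⟨ψ', hψ', hlt⟩ := Filter.extraction_of_frequently_atTop hcase
    have huLim0 : 0 < uLim := lt_of_le_of_lt (hu (ψ (ψ' 0))).1 (hlt 0)
    have hleft := cadlag_tendsto_left hF ⟨huLim0, huLim.2⟩
    have htu : Tendsto (fun i => u (ψ (ψ' i))) atTop (𝓝[<] uLim) :=
      tendsto_nhdsWithin_iff.2 ⟨hulim.comp hψ'.tendsto_atTop,
        Filter.Eventually.of_forall fun i => hlt i⟩
    have hta : Tendsto (fun i => a (ψ (ψ' i))) atTop (𝓝[<] uLim) :=
      tendsto_nhdsWithin_iff.2 ⟨halim.comp hψ'.tendsto_atTop,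
        Filter.Eventually.of_forall fun i => lt_of_le_of_lt (hale _) (hlt i)⟩
    have hdist : Tendsto (fun i => dist (F (u (ψ (ψ' i)))) (F (a (ψ (ψ' i))))) atTop
        (𝓝 (dist (Function.leftLim F uLim) (Function.leftLim F uLim))) :=
      (hleft.comp htu).dist (hleft.comp hta)
    rw [dist_self] at hdist
    have : ε ≤ 0 := ge_of_tendsto hdist (Filter.Eventually.of_forall fun i => hd' _)
    linarith
  · -- u eventually from the right
    rw [Filter.not_frequently] at hcase
    have hge : ∀ᶠ i in atTop, uLim ≤ u (ψ i) := hcase.mono fun i h => not_lt.1 h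
    have huLimT : uLim < T := by
      rcases lt_or_eq_of_le huLim.2 with h | h
      · exact h
      · exfalso
        obtain ⟨i, hi⟩ := hge.exists
        have := huT (ψ i)
        rw [h] at hi
        linarith
    have hright := cadlag_tendsto_right hF huLim.1 huLimT
    have htu : Tendsto (fun i => u (ψ i)) atTop (𝓝[≥] uLim) :=
      tendsto_nhdsWithin_iff.2 ⟨hulim, hge⟩
    have hFu : Tendsto (fun i => F (u (ψ i))) atTop (𝓝 (F uLim)) := hright.comp htu
    by_cases hA : ∃ᶠ i in atTop, a (ψ i) < uLim
    · -- a from the left: F(a) tends to the left limit, which must equal F(uLim) unless jump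
      obtain ⟨ψ', hψ', hlt⟩ := Filter.extraction_of_frequently_atTop hA
      have huLim0 : 0 < uLim := lt_of_le_of_lt (ha0 (ψ (ψ' 0))) (hlt 0)
      have hleft := cadlag_tendsto_left hF ⟨huLim0, huLim.2⟩
      have hta : Tendsto (fun i => a (ψ (ψ' i))) atTop (𝓝[<] uLim) :=
        tendsto_nhdsWithin_iff.2 ⟨halim.comp hψ'.tendsto_atTop,
          Filter.Eventually.of_forall fun i => hlt i⟩
      have hdist : Tendsto (fun i => dist (F (u (ψ (ψ' i)))) (F (a (ψ (ψ' i))))) atTop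
          (𝓝 (dist (F uLim) (Function.leftLim F uLim))) :=
        (hFu.comp hψ'.tendsto_atTop).dist (hleft.comp hta)
      have hεd : ε ≤ dist (F uLim) (Function.leftLim F uLim) :=
        ge_of_tendsto hdist (Filter.Eventually.of_forall fun i => hd' _)
      have hjump : uLim ∈ jumpSet F T := by
        refine ⟨⟨huLim0, huLim.2⟩, fun h => ?_⟩
        rw [h, dist_self] at hεd
        linarith
      obtain ⟨n₀, k₀, hk₀, htk⟩ := hJ hjump
      have hge' : ∀ᶠ i in atTop, uLim ≤ u (ψ (ψ' i)) := hψ'.tendsto_atTop.eventually hge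
      obtain ⟨i, hi₁, hi₂⟩ := ((eventually_ge_atTop n₀).and hge').exists
      -- at index i, uLim is a partition point of P^{φ (ψ (ψ' i))} and ≤ u, so a ≥ uLim
      set n := φ (ψ (ψ' i)) with hn
      have hn₀ : n₀ ≤ n :=
        le_trans hi₁ (le_trans hψ'.le_apply (le_trans hψ.le_apply hφ.le_apply))
      obtain ⟨l, hl, hle⟩ := π.nested_trans hn₀ hk₀
      have hlu : π.t n l ≤ u (ψ (ψ' i)) := by rw [hle, htk]; exact hi₂
      have := π.le_idx hl hlu
      have h2 : uLim ≤ a (ψ (ψ' i)) := by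
        rw [ha]
        calc uLim = π.t n l := by rw [hle, htk]
          _ ≤ π.t n (π.idx n (u (ψ (ψ' i)))) := π.pt_mono this π.idx_le
      exact absurd (hlt i) (not_lt.2 h2)
    · -- a eventually from the right too: both tend to F(uLim)
      rw [Filter.not_frequently] at hA
      have hgea : ∀ᶠ i in atTop, uLim ≤ a (ψ i) := hA.mono fun i h => not_lt.1 h
      have hta : Tendsto (fun i => a (ψ i)) atTop (𝓝[≥] uLim) :=
        tendsto_nhdsWithin_iff.2 ⟨halim, hgea⟩
      have hFa : Tendsto (fun i => F (a (ψ i))) atTop (𝓝 (F uLim)) := hright.comp hta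
      have hdist : Tendsto (fun i => dist (F (u (ψ i))) (F (a (ψ i)))) atTop
          (𝓝 (dist (F uLim) (F uLim))) := hFu.dist hFa
      rw [dist_self] at hdist
      have : ε ≤ 0 := ge_of_tendsto hdist (Filter.Eventually.of_forall fun i => hd' _)
      linarith

/-- **Pointwise/uniform convergence of the left-point discretizations** (Proposition 2.?).
For a càdlàg path `F` and a nested sequence of partitions with vanishing mesh, the
following are equivalent: (i) `J_F ⊆ ∪_n P^n`; (ii) `F^n → F` pointwise on `[0,T]`;
(iii) `F^n → F` uniformly on `[0,T]`. -/
theorem discretization_convergence_tfae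
    (d : ℕ) (T : ℝ) (hT : 0 < T) (π : PartitionSeq T) (F : ℝ → Vec d)
    (hF : CadlagOn F 0 T) :
    ((jumpSet F T ⊆ π.points) ↔
        (∀ t ∈ Icc (0 : ℝ) T, Tendsto (fun n => π.disc F n t) atTop (𝓝 (F t)))) ∧
    ((∀ t ∈ Icc (0 : ℝ) T, Tendsto (fun n => π.disc F n t) atTop (𝓝 (F t))) ↔
        TendstoUniformlyOn (fun n => π.disc F n) F atTop (Icc 0 T)) := by
  constructor
  · constructor
    · intro hJ t ht
      exact tendsto_disc_of_jump_subset hF hJ ht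
    · intro hpw
      exact jump_subset_of_tendsto_disc hF hpw
  · constructor
    · intro hpw
      exact unif_of_jump_subset hT hF (jump_subset_of_tendsto_disc hF hpw)
    · intro hu t ht
      exact hu.tendsto_at ht
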